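/- arXiv:0712.0144 — 2 statements merged into one kernel-verified Lean document; each statement's English description precedes it below -/
import Mathlib

section
/- If {b₁, b₂} is a Z-basis of Z², then the Virasoro-like algebra L is generated as a Lie algebra by the three elements D(b₁), D(b₂), D(-b₁-b₂). -/
/-- `det(m,n) = m₁n₂ - m₂n₁`. -/
def detZ (m n : ℤ × ℤ) : ℤ := m.1 * n.2 - m.2 * n.1

lemma detZ_combo (a b c d : ℤ) (u v : ℤ × ℤ) :
    detZ (a • u + b • v) (c • u + d • v) = (a * d - b * c) * detZ u v := by
  simp only [detZ, Prod.fst_add, Prod.snd_add, Prod.smul_fst, Prod.smul_snd, smul_eq_mul]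
  ring

/-- If `{b₁, b₂}` is a `ℤ`-basis of `ℤ²`, then the Virasoro-like algebra `L` (any Lie algebra
spanned by elements `D(m)`, `c₁`, `c₂` satisfying the defining relations) is generated as a
Lie algebra by the three elements `D(b₁)`, `D(b₂)`, `D(-b₁-b₂)`. -/
theorem stmt2 (L : Type*) [LieRing L] [LieAlgebra ℂ L]
    (D : ℤ × ℤ → L) (c₁ c₂ : L)
    (hD0 : D 0 = 0)
    (hc₁ : ∀ x : L, ⁅c₁, x⁆ = 0) (hc₂ : ∀ x : L, ⁅c₂, x⁆ = 0)
    (hbr : ∀ m n : ℤ × ℤ, ⁅D m, D n⁆ =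
      (-(detZ m n : ℂ)) • D (m + n)
        + (if m + n = 0 then (m.1 : ℂ) • c₁ + (m.2 : ℂ) • c₂ else 0))
    (hspan : Submodule.span ℂ (Set.range D ∪ {c₁, c₂}) = ⊤)
    (b₁ b₂ : ℤ × ℤ) (hbasis : Submodule.span ℤ ({b₁, b₂} : Set (ℤ × ℤ)) = ⊤) :
    LieSubalgebra.lieSpan ℂ L {D b₁, D b₂, D (-b₁ - b₂)} = ⊤ := by
  set S := LieSubalgebra.lieSpan ℂ L {D b₁, D b₂, D (-b₁ - b₂)} with hS
  -- every element of ℤ² is an integer combination of b₁, b₂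
  have hmem : ∀ m : ℤ × ℤ, ∃ a b : ℤ, a • b₁ + b • b₂ = m := by
    intro m
    have : m ∈ Submodule.span ℤ ({b₁, b₂} : Set (ℤ × ℤ)) := by rw [hbasis]; trivial
    rwa [Submodule.mem_span_pair] at this
  -- the determinant of the basis is nonzero
  have hd0 : detZ b₁ b₂ ≠ 0 := by
    obtain ⟨p, q, h1⟩ := hmem (1, 0)
    obtain ⟨r, s, h2⟩ := hmem (0, 1)
    have key : detZ (p • b₁ + q • b₂) (r • b₁ + s • b₂) = (p * s - q * r) * detZ b₁ b₂ :=
      detZ_combo p q r s b₁ b₂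
    rw [h1, h2] at key
    have : (1 : ℤ) = (p * s - q * r) * detZ b₁ b₂ := by
      simpa [detZ] using key
    intro h
    rw [h, mul_zero] at this
    exact one_ne_zero this
  -- the three generators
  have hg1 : D b₁ ∈ S := LieSubalgebra.subset_lieSpan (by simp)
  have hg2 : D b₂ ∈ S := LieSubalgebra.subset_lieSpan (by simp)
  have hg3 : D (-b₁ - b₂) ∈ S := LieSubalgebra.subset_lieSpan (by simp)
  -- key closure step
  have hstep : ∀ m n : ℤ × ℤ, D m ∈ S → D n ∈ S → detZ m n ≠ 0 → D (m + n) ∈ S := by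
    intro m n hm hn hdet
    by_cases h0 : m + n = 0
    · rw [h0, hD0]; exact S.zero_mem
    · have hb := hbr m n
      rw [if_neg h0, add_zero] at hb
      have hne : (-(detZ m n : ℂ)) ≠ 0 := by
        simpa using hdet
      have : D (m + n) = (-(detZ m n : ℂ))⁻¹ • ⁅D m, D n⁆ := by
        rw [hb, smul_smul, inv_mul_cancel₀ hne, one_smul]
      rw [this]
      exact S.smul_mem _ (S.lie_mem hm hn)
  -- membership predicate in coordinates
  set P : ℤ → ℤ → Prop := fun a b => D (a • b₁ + b • b₂) ∈ S with hP
  have hkey : ∀ a b c d : ℤ, P a b → P c d → a * d - b * c ≠ 0 → P (a + c) (b + d) := by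
    intro a b c d ha hc hdet
    have hv : (a + c) • b₁ + (b + d) • b₂ = (a • b₁ + b • b₂) + (c • b₁ + d • b₂) := by
      module
    show D _ ∈ S
    rw [hv]
    refine hstep _ _ ha hc ?_
    rw [detZ_combo]
    exact mul_ne_zero hdet hd0
  have hP10 : P 1 0 := by
    show D _ ∈ S
    rw [show (1 : ℤ) • b₁ + (0 : ℤ) • b₂ = b₁ by module]
    exact hg1
  have hP01 : P 0 1 := by
    show D _ ∈ S
    rw [show (0 : ℤ) • b₁ + (1 : ℤ) • b₂ = b₂ by module]
    exact hg2
  have hPm1m1 : P (-1) (-1) := by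
    show D _ ∈ S
    rw [show (-1 : ℤ) • b₁ + (-1 : ℤ) • b₂ = -b₁ - b₂ by module]
    exact hg3
  have hP0m1 : P 0 (-1) := by
    have := hkey 1 0 (-1) (-1) hP10 hPm1m1 (by norm_num)
    norm_num at this
    exact this
  have hPm10 : P (-1) 0 := by
    have := hkey 0 1 (-1) (-1) hP01 hPm1m1 (by norm_num)
    norm_num at this
    exact this
  -- all P a 1
  have hA : ∀ a : ℤ, P a 1 := by
    intro a
    induction a using Int.induction_on with
    | zero => exact hP01
    | succ i ih =>
        have := hkey i 1 1 0 ih hP10 (by norm_num)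
        norm_num at this
        exact this
    | pred i ih =>
        have := hkey (-i) 1 (-1) 0 ih hPm10 (by norm_num)
        have h2 : (-(i:ℤ) + -1) = -(i:ℤ) - 1 := by ring
        rw [h2, add_zero] at this
        exact this
  -- all P a (-1)
  have hB : ∀ a : ℤ, P a (-1) := by
    intro a
    induction a using Int.induction_on with
    | zero => exact hP0m1
    | succ i ih =>
        have := hkey i (-1) 1 0 ih hP10 (by norm_num)
        norm_num at this
        exact this
    | pred i ih =>
        have := hkey (-i) (-1) (-1) 0 ih hPm10 (by norm_num)
        have h2 : (-(i:ℤ) + -1) = -(i:ℤ) - 1 := by ring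
        rw [h2, add_zero] at this
        exact this
  -- P a b for b ≠ 0, by induction on |b|
  have hC : ∀ n : ℕ, ∀ b : ℤ, b.natAbs ≤ n + 1 → b ≠ 0 → ∀ a, P a b := by
    intro n
    induction n with
    | zero =>
        intro b hb hb0 a
        have : b = 1 ∨ b = -1 := by omega
        rcases this with rfl | rfl
        · exact hA a
        · exact hB a
    | succ n ih =>
        intro b hb hb0 a
        by_cases hble : b.natAbs ≤ n + 1
        · exact ih b hble hb0 a
        · obtain ⟨s, hs, hs2, hs3⟩ :
              ∃ s : ℤ, (s = 1 ∨ s = -1) ∧ (b - s).natAbs ≤ n + 1 ∧ b - s ≠ 0 := by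
            by_cases hbpos : 0 < b
            · exact ⟨1, Or.inl rfl, by omega, by omega⟩
            · exact ⟨-1, Or.inr rfl, by omega, by omega⟩
          have hPs : ∀ a', P a' s := by
            rcases hs with rfl | rfl
            · exact hA
            · exact hB
          by_cases ha : a = 0
          · subst ha
            have := hkey (-1) (b - s) 1 s (ih (b - s) hs2 hs3 (-1)) (hPs 1)
              (by rcases hs with rfl | rfl <;> omega)
            have h2 : ((-1 : ℤ) + 1) = 0 := by ring
            have h3 : (b - s + s) = b := by ring
            rw [h2, h3] at this
            exact this
          · have := hkey a (b - s) 0 s (ih (b - s) hs2 hs3 a) (hPs 0)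
              (by rcases hs with rfl | rfl <;> omega)
            have h3 : (b - s + s) = b := by ring
            rw [add_zero, h3] at this
            exact this
  -- all D m ∈ S
  have hall : ∀ m : ℤ × ℤ, D m ∈ S := by
    intro m
    obtain ⟨a, b, hab⟩ := hmem m
    rw [← hab]
    by_cases hb : b = 0
    · subst hb
      by_cases ha : a = 0
      · subst ha
        have : (0 : ℤ) • b₁ + (0 : ℤ) • b₂ = 0 := by module
        rw [this, hD0]
        exact S.zero_mem
      · have := hkey a (-1) 0 1 (hB a) hP01 (by omega)
        have h2 : (a + 0) = a := by ring
        have h3 : ((-1 : ℤ) + 1) = 0 := by ring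
        rw [h2, h3] at this
        exact this
    · exact hC b.natAbs b (by omega) hb a
  -- the central elements are in S
  have hv1 : (b₁.1 : ℂ) • c₁ + (b₁.2 : ℂ) • c₂ ∈ S := by
    have hb := hbr b₁ (-b₁)
    rw [if_pos (by simp), show detZ b₁ (-b₁) = 0 by simp [detZ]; ring] at hb
    simp only [Int.cast_zero, neg_zero, zero_smul, zero_add] at hb
    rw [← hb]
    exact S.lie_mem hg1 (hall (-b₁))
  have hv2 : (b₂.1 : ℂ) • c₁ + (b₂.2 : ℂ) • c₂ ∈ S := by
    have hb := hbr b₂ (-b₂)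
    rw [if_pos (by simp), show detZ b₂ (-b₂) = 0 by simp [detZ]; ring] at hb
    simp only [Int.cast_zero, neg_zero, zero_smul, zero_add] at hb
    rw [← hb]
    exact S.lie_mem hg2 (hall (-b₂))
  have hdC : (detZ b₁ b₂ : ℂ) ≠ 0 := by exact_mod_cast hd0
  have hc1S : c₁ ∈ S := by
    have heq : c₁ = (detZ b₁ b₂ : ℂ)⁻¹ •
        ((b₂.2 : ℂ) • ((b₁.1 : ℂ) • c₁ + (b₁.2 : ℂ) • c₂)
          - (b₁.2 : ℂ) • ((b₂.1 : ℂ) • c₁ + (b₂.2 : ℂ) • c₂)) := by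
      have : (detZ b₁ b₂ : ℂ) • c₁ =
          (b₂.2 : ℂ) • ((b₁.1 : ℂ) • c₁ + (b₁.2 : ℂ) • c₂)
            - (b₁.2 : ℂ) • ((b₂.1 : ℂ) • c₁ + (b₂.2 : ℂ) • c₂) := by
        simp only [detZ, smul_add, smul_smul]
        push_cast
        module
      rw [← this, smul_smul, inv_mul_cancel₀ hdC, one_smul]
    rw [heq]
    exact S.smul_mem _ (S.sub_mem (S.smul_mem _ hv1) (S.smul_mem _ hv2))
  have hc2S : c₂ ∈ S := by
    have heq : c₂ = (detZ b₁ b₂ : ℂ)⁻¹ •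
        ((b₁.1 : ℂ) • ((b₂.1 : ℂ) • c₁ + (b₂.2 : ℂ) • c₂)
          - (b₂.1 : ℂ) • ((b₁.1 : ℂ) • c₁ + (b₁.2 : ℂ) • c₂)) := by
      have : (detZ b₁ b₂ : ℂ) • c₂ =
          (b₁.1 : ℂ) • ((b₂.1 : ℂ) • c₁ + (b₂.2 : ℂ) • c₂)
            - (b₂.1 : ℂ) • ((b₁.1 : ℂ) • c₁ + (b₁.2 : ℂ) • c₂) := by
        simp only [detZ, smul_add, smul_smul]
        push_cast
        module
      rw [← this, smul_smul, inv_mul_cancel₀ hdC, one_smul]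
    rw [heq]
    exact S.smul_mem _ (S.sub_mem (S.smul_mem _ hv2) (S.smul_mem _ hv1))
  -- conclude
  rw [eq_top_iff]
  intro x _
  have hx : x ∈ Submodule.span ℂ (Set.range D ∪ {c₁, c₂}) := by rw [hspan]; trivial
  have hsub : Set.range D ∪ {c₁, c₂} ⊆ (S : Set L) := by
    rintro y (⟨m, rfl⟩ | hy)
    · exact hall m
    · rcases hy with rfl | rfl
      · exact hc1S
      · exact hc2S
  have := Submodule.span_le.2 hsub hx
  exact this
end

section
/- Let V be a nontrivial irreducible Z-graded module of the intermediate series (all homogeneous components of dimension ≤ 1) over the Virasoro-like algebra L. If there exists i and 0 ≠ v_i ∈ V_i with D(b₁)·v_i = 0, then D(b₁ + b₂)·v_i = 0 as well, and hence v_i is annihilated by D(b₁) and D(b₁+b₂); since {b₁, b₁+b₂} is a Z-basis of Z², V is a generalized highest weight module. -/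
/-- Let `V` be a nontrivial irreducible `ℤ`-graded module of the intermediate series
(`dim V_i ≤ 1`) over the Virasoro-like algebra (operators `ρ(m)` satisfying the defining
relations with centers acting as scalars `κ₁, κ₂`, grading relative to a `ℤ`-basis
`{b₁, b₂}`). If some nonzero `v ∈ V_i` satisfies `D(b₁)·v = 0`, then also
`D(b₁+b₂)·v = 0`; since `{b₁, b₁+b₂}` is a `ℤ`-basis, `v` is a generalized highest weight
vector: there is a `ℤ`-basis `{b'₁, b'₂}` with `D(m₁b'₁+m₂b'₂)·v = 0` for all
`m₁, m₂ ≥ 1`, so `V` is a generalized highest weight module. -/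
theorem stmt18 (V : Type*) [AddCommGroup V] [Module ℂ V]
    (ρ : ℤ × ℤ → Module.End ℂ V) (κ₁ κ₂ : ℂ)
    (hρ0 : ρ 0 = 0)
    (hbr : ∀ m n : ℤ × ℤ, ρ m * ρ n - ρ n * ρ m =
      (-(detZ m n : ℂ)) • ρ (m + n)
        + (if m + n = 0 then ((m.1 : ℂ) * κ₁ + (m.2 : ℂ) * κ₂) • (1 : Module.End ℂ V)
           else 0))
    (b₁ b₂ : ℤ × ℤ) (hbasis : Submodule.span ℤ ({b₁, b₂} : Set (ℤ × ℤ)) = ⊤)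
    (Vg : ℤ → Submodule ℂ V) (hV : DirectSum.IsInternal Vg)
    (hgrade : ∀ (j m n : ℤ), ∀ w ∈ Vg n, ρ (j • b₁ + m • b₂) w ∈ Vg (j + n))
    (hdim : ∀ i : ℤ, Module.rank ℂ (Vg i) ≤ 1)
    (i : ℤ) (v : V) (hvmem : v ∈ Vg i) (hv : v ≠ 0) (h1 : ρ b₁ v = 0) :
    ρ (b₁ + b₂) v = 0 ∧
    ∃ b₁' b₂' : ℤ × ℤ, Submodule.span ℤ ({b₁', b₂'} : Set (ℤ × ℤ)) = ⊤ ∧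
      ∀ m₁ m₂ : ℤ, 1 ≤ m₁ → 1 ≤ m₂ → ρ (m₁ • b₁' + m₂ • b₂') v = 0 := by
  classical
  -- the determinant of the basis is nonzero
  have h10 : ((1, 0) : ℤ × ℤ) ∈ Submodule.span ℤ ({b₁, b₂} : Set (ℤ × ℤ)) := by
    rw [hbasis]; trivial
  have h01 : ((0, 1) : ℤ × ℤ) ∈ Submodule.span ℤ ({b₁, b₂} : Set (ℤ × ℤ)) := by
    rw [hbasis]; trivial
  obtain ⟨x, y, hxy⟩ := Submodule.mem_span_pair.mp h10
  obtain ⟨z, w, hzw⟩ := Submodule.mem_span_pair.mp h01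
  have e1 : x * b₁.1 + y * b₂.1 = 1 := by
    have := congrArg Prod.fst hxy; simpa [smul_eq_mul] using this
  have e2 : x * b₁.2 + y * b₂.2 = 0 := by
    have := congrArg Prod.snd hxy; simpa [smul_eq_mul] using this
  have e3 : z * b₁.1 + w * b₂.1 = 0 := by
    have := congrArg Prod.fst hzw; simpa [smul_eq_mul] using this
  have e4 : z * b₁.2 + w * b₂.2 = 1 := by
    have := congrArg Prod.snd hzw; simpa [smul_eq_mul] using this
  have key : (x * w - y * z) * detZ b₁ b₂ = 1 := by
    unfold detZ
    linear_combination (z * b₁.2 + w * b₂.2) * e1 - (z * b₁.1 + w * b₂.1) * e2 + e4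
  have hdet : detZ b₁ b₂ ≠ 0 := by
    intro h; rw [h, mul_zero] at key; exact zero_ne_one key
  -- linear independence of b₁, b₂
  have hindep : ∀ c d : ℤ, c • b₁ + d • b₂ = 0 → c = 0 ∧ d = 0 := by
    intro c d hcd
    have f1 : c * b₁.1 + d * b₂.1 = 0 := by
      have := congrArg Prod.fst hcd; simpa [smul_eq_mul] using this
    have f2 : c * b₁.2 + d * b₂.2 = 0 := by
      have := congrArg Prod.snd hcd; simpa [smul_eq_mul] using this
    constructor
    · have : c * detZ b₁ b₂ = 0 := by
        unfold detZ; linear_combination b₂.2 * f1 - b₂.1 * f2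
      exact (mul_eq_zero.mp this).resolve_right hdet
    · have : d * detZ b₁ b₂ = 0 := by
        unfold detZ; linear_combination b₁.1 * f2 - b₁.2 * f1
      exact (mul_eq_zero.mp this).resolve_right hdet
  have hne : ∀ c d : ℤ, c ≠ 0 → c • b₁ + d • b₂ ≠ 0 := fun c d hc h =>
    hc (hindep c d h).1
  -- the key bracket step
  have step : ∀ (a b : ℤ × ℤ) (lam : ℂ), detZ a b ≠ 0 → a + b ≠ 0 →
      ρ a v = 0 → ρ b v = lam • v → ρ (a + b) v = 0 := by
    intro a b lam hd hab ha hb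
    have h := DFunLike.congr_fun (hbr a b) v
    rw [if_neg hab, add_zero] at h
    simp only [LinearMap.sub_apply, Module.End.mul_apply, LinearMap.smul_apply,
      ha, hb, map_zero, map_smul, smul_zero, sub_zero] at h
    have hd' : (-(detZ a b : ℂ)) ≠ 0 := by
      simp only [ne_eq, neg_eq_zero, Int.cast_eq_zero]; exact hd
    have := h.symm
    rw [smul_eq_zero] at this
    exact this.resolve_left hd'
  -- ρ b₂ acts as a scalar on v
  have hmem : ρ b₂ v ∈ Vg i := by
    have := hgrade 0 1 i v hvmem
    simpa using this
  obtain ⟨v₀, hv₀⟩ := rank_le_one_iff.mp (hdim i)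
  obtain ⟨r, hr⟩ := hv₀ ⟨v, hvmem⟩
  obtain ⟨s, hs⟩ := hv₀ ⟨ρ b₂ v, hmem⟩
  have hrv : r • (v₀ : V) = v := congrArg Subtype.val hr
  have hsv : s • (v₀ : V) = ρ b₂ v := congrArg Subtype.val hs
  have hr0 : r ≠ 0 := by
    intro h; apply hv; rw [← hrv, h, zero_smul]
  have hlam : ρ b₂ v = (s / r) • v := by
    rw [← hsv, ← hrv, smul_smul, div_mul_cancel₀ _ hr0]
  -- first conclusion
  have hsum11 : b₁ + b₂ ≠ 0 := by
    intro h
    have := hindep 1 1 (by simpa using h)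
    exact one_ne_zero this.1
  have h2 : ρ (b₁ + b₂) v = 0 := step b₁ b₂ (s / r) hdet hsum11 h1 hlam
  refine ⟨h2, b₁, b₁ + b₂, ?_, ?_⟩
  · -- {b₁, b₁+b₂} spans
    rw [eq_top_iff, ← hbasis]
    apply Submodule.span_le.mpr
    rintro u (rfl | rfl)
    · exact Submodule.subset_span (Set.mem_insert _ _)
    · exact Submodule.mem_span_pair.mpr ⟨-1, 1, by module⟩
  · -- the generalized highest weight property
    have hrow : ∀ m₁ : ℤ, 1 ≤ m₁ → ρ (m₁ • b₁ + (b₁ + b₂)) v = 0 := by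
      intro m₁
      refine Int.le_induction (motive := fun k _ => ρ (k • b₁ + (b₁ + b₂)) v = 0) ?_ ?_ m₁
      · have hd : detZ b₁ (b₁ + b₂) ≠ 0 := by
          have : detZ b₁ (b₁ + b₂) = detZ b₁ b₂ := by
            unfold detZ
            simp only [Prod.fst_add, Prod.snd_add]
            ring
          rw [this]; exact hdet
        have hs : b₁ + (b₁ + b₂) ≠ 0 := by
          have : b₁ + (b₁ + b₂) = (2 : ℤ) • b₁ + (1 : ℤ) • b₂ := by module
          rw [this]; exact hne 2 1 two_ne_zero
        have := step b₁ (b₁ + b₂) 0 hd hs h1 (by rw [h2, zero_smul])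
        simpa only [one_smul] using this
      · intro n hn ih
        show ρ ((n + 1) • b₁ + (b₁ + b₂)) v = 0
        have hd : detZ b₁ (n • b₁ + (b₁ + b₂)) ≠ 0 := by
          have : detZ b₁ (n • b₁ + (b₁ + b₂)) = detZ b₁ b₂ := by
            unfold detZ
            simp only [Prod.fst_add, Prod.snd_add, Prod.smul_fst, Prod.smul_snd, smul_eq_mul]
            ring
          rw [this]; exact hdet
        have hs : b₁ + (n • b₁ + (b₁ + b₂)) ≠ 0 := by
          have : b₁ + (n • b₁ + (b₁ + b₂)) = (n + 2) • b₁ + (1 : ℤ) • b₂ := by module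
          rw [this]; exact hne (n + 2) 1 (by omega)
        have := step b₁ (n • b₁ + (b₁ + b₂)) 0 hd hs h1 (by rw [ih, zero_smul])
        have heq : b₁ + (n • b₁ + (b₁ + b₂)) = (n + 1) • b₁ + (b₁ + b₂) := by module
        rwa [heq] at this
    intro m₁ m₂ hm₁
    refine Int.le_induction (motive := fun k _ => ρ (m₁ • b₁ + k • (b₁ + b₂)) v = 0) ?_ ?_ m₂
    · simpa only [one_smul] using hrow m₁ hm₁
    · intro n hn ih
      show ρ (m₁ • b₁ + (n + 1) • (b₁ + b₂)) v = 0
      have hd : detZ (b₁ + b₂) (m₁ • b₁ + n • (b₁ + b₂)) ≠ 0 := by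
        have : detZ (b₁ + b₂) (m₁ • b₁ + n • (b₁ + b₂)) = -m₁ * detZ b₁ b₂ := by
          unfold detZ
          simp only [Prod.fst_add, Prod.snd_add, Prod.smul_fst, Prod.smul_snd, smul_eq_mul]
          ring
        rw [this]
        exact mul_ne_zero (by omega) hdet
      have hs : (b₁ + b₂) + (m₁ • b₁ + n • (b₁ + b₂)) ≠ 0 := by
        have : (b₁ + b₂) + (m₁ • b₁ + n • (b₁ + b₂)) =
            (m₁ + n + 1) • b₁ + (n + 1) • b₂ := by module
        rw [this]; exact hne (m₁ + n + 1) (n + 1) (by omega)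
      have := step (b₁ + b₂) (m₁ • b₁ + n • (b₁ + b₂)) 0 hd hs h2 (by rw [ih, zero_smul])
      have heq : (b₁ + b₂) + (m₁ • b₁ + n • (b₁ + b₂)) = m₁ • b₁ + (n + 1) • (b₁ + b₂) := by
        module
      rwa [heq] at this
end
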